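/- Let a, b be complex numbers and U an open neighborhood of the line segment joining a to b. Then the function z ↦ log((z-b)/(z-a)) admits an analytic branch on the complement of U (more precisely, the Möbius transformation z ↦ (z-b)/(z-a) maps ℂ \ U into a simply connected open subset of ℂ \ {0}, so a holomorphic logarithm exists there). -/

import Mathlib

/-- For `a b : ℂ` and an open set `U` containing the segment `[a, b]`, there is a
holomorphic branch of `log ((z - b)/(z - a))` on the complement of `U`. -/
theorem holomorphic_log_mobius_off_segment (a b : ℂ) (U : Set ℂ) (hU : IsOpen U)
    (hseg : segment ℝ a b ⊆ U) :
    ∃ f : ℂ → ℂ, DifferentiableOn ℂ f Uᶜ ∧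
      ∀ z ∈ Uᶜ, Complex.exp (f z) = (z - b) / (z - a) := by
  have key : ∀ z ∈ Uᶜ, (z - b) / (z - a) ∈ Complex.slitPlane := by
    intro z hz
    have ha : z ≠ a := fun h => hz (hseg (h ▸ left_mem_segment ℝ a b))
    by_contra hmem
    rw [Complex.mem_slitPlane_iff] at hmem
    push_neg at hmem
    obtain ⟨hre, him⟩ := hmem
    set w := (z - b) / (z - a) with hw
    have hzb : z - b = w * (z - a) := by
      rw [hw, div_mul_cancel₀ _ (sub_ne_zero.mpr ha)]
    set t := w.re with ht
    have hwt : w = (t : ℂ) := Complex.ext rfl (by simpa using him)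
    have htle : t ≤ 0 := hre
    have h1t : (0:ℝ) < 1 - t := by linarith
    have h1t' : ((1 - t : ℝ) : ℂ) ≠ 0 := by exact_mod_cast h1t.ne'
    have hzmem : z ∈ segment ℝ a b := by
      have hc : (1 - (t : ℂ)) ≠ 0 := by exact_mod_cast h1t'
      refine ⟨-t / (1 - t), 1 / (1 - t), div_nonneg (by linarith) h1t.le,
        div_nonneg one_pos.le h1t.le, by field_simp; ring, ?_⟩
      rw [hwt] at hzb
      simp only [Complex.real_smul]
      push_cast
      field_simp [hc]
      linear_combination -hzb
    exact hz (hseg hzmem)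
  refine ⟨fun z => Complex.log ((z - b) / (z - a)), ?_, ?_⟩
  · intro z hz
    have ha : z ≠ a := fun h => hz (hseg (h ▸ left_mem_segment ℝ a b))
    have hg : DifferentiableAt ℂ (fun z : ℂ => (z - b) / (z - a)) z :=
      ((differentiableAt_id.sub (differentiableAt_const b)).div
        ((differentiableAt_id.sub (differentiableAt_const a)))
        (sub_ne_zero.mpr ha))
    exact ((Complex.differentiableAt_log (key z hz)).comp z hg).differentiableWithinAt
  · intro z hz
    exact Complex.exp_log (Complex.slitPlane_ne_zero (key z hz))
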